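/- The optimal value of problem (P1) with the anyput state throughput T_w = ν_w·γ_w equals the optimal value of problem (P3); that is, the supremum of Σ_{w∈W} π_w ν_w γ_w over all distributions π feasible for (P1) equals the supremum of Σ_i β_i over all (α,β,χ) feasible for (P3). -/

import Mathlib

open Finset

inductive NodeState : Type
  | s | l | x
deriving DecidableEq

instance : Fintype NodeState :=
  ⟨{NodeState.s, NodeState.l, NodeState.x}, fun a => by cases a <;> simp⟩

abbrev NetState (N : ℕ) := Fin N → NodeState

/-- Number of nodes in transmit state. -/
def numTransmit {N : ℕ} (w : NetState N) : ℕ :=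
  (univ.filter fun i => w i = NodeState.x).card

/-- Number of nodes in listen state. -/
def numListen {N : ℕ} (w : NetState N) : ℕ :=
  (univ.filter fun i => w i = NodeState.l).card

/-- The (finite) set `W` of collision-free network states. -/
def CF (N : ℕ) : Finset (NetState N) :=
  univ.filter fun w => numTransmit w ≤ 1

/-- Indicator `ν_w` that exactly one node is transmitting. -/
def nu {N : ℕ} (w : NetState N) : ℝ := if numTransmit w = 1 then 1 else 0

/-- Indicator `γ_w` that at least one node is listening. -/
def gam {N : ℕ} (w : NetState N) : ℝ := if 0 < numListen w then 1 else 0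

/-- A probability distribution on `W`, feasible for problem (P1). -/
def P1Feasible (N : ℕ) (L X ρ : Fin N → ℝ) (π : NetState N → ℝ) : Prop :=
  (∀ w, 0 ≤ π w) ∧ (∀ w ∉ CF N, π w = 0) ∧ (∑ w ∈ CF N, π w = 1) ∧
  (∀ i, (∑ w ∈ (CF N).filter (fun w => w i = NodeState.l), π w) * L i
      + (∑ w ∈ (CF N).filter (fun w => w i = NodeState.x), π w) * X i ≤ ρ i)

/-- Feasibility for problem (P3). -/
def P3Feasible (N : ℕ) (L X ρ : Fin N → ℝ) (α β : Fin N → ℝ)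
    (χ : Fin N → Fin N → ℝ) : Prop :=
  (∀ i, α i ∈ Set.Icc (0 : ℝ) 1) ∧ (∀ i, β i ∈ Set.Icc (0 : ℝ) 1) ∧
  (∀ i j, i ≠ j → 0 ≤ χ i j) ∧
  (∀ i, α i * L i + β i * X i ≤ ρ i) ∧
  (∀ i, α i + β i ≤ 1) ∧ (∑ i, β i ≤ 1) ∧
  (∀ i, β i ≤ ∑ j ∈ univ.erase i, χ i j) ∧
  (∀ j, α j = ∑ i ∈ univ.erase j, χ i j)

lemma mem_CF {N : ℕ} (w : NetState N) : w ∈ CF N ↔ numTransmit w ≤ 1 := by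
  simp [CF]

def sleepSt (N : ℕ) : NetState N := fun _ => NodeState.s

def pairSt {N : ℕ} (i j : Fin N) : NetState N :=
  fun k => if k = i then NodeState.x else if k = j then NodeState.l else NodeState.s

lemma numTransmit_sleep (N : ℕ) : numTransmit (sleepSt N) = 0 := by
  simp [numTransmit, sleepSt]

lemma numListen_sleep (N : ℕ) : numListen (sleepSt N) = 0 := by
  simp [numListen, sleepSt]

lemma sleep_mem_CF (N : ℕ) : sleepSt N ∈ CF N := by
  rw [mem_CF, numTransmit_sleep]; omega

lemma pairSt_eq_x_iff {N : ℕ} (i j k : Fin N) : pairSt i j k = NodeState.x ↔ k = i := by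
  unfold pairSt; split_ifs with h1 h2 <;> simp [h1]

lemma pairSt_eq_l_iff {N : ℕ} (i j k : Fin N) (hji : j ≠ i) :
    pairSt i j k = NodeState.l ↔ k = j := by
  unfold pairSt
  split_ifs with h1 h2
  · constructor
    · intro h; exact absurd h (by decide)
    · intro h; exact absurd (h1.symm.trans h).symm hji
  · simp [h2]
  · constructor
    · intro h; exact absurd h (by decide)
    · intro h; exact absurd h h2

lemma numTransmit_pair {N : ℕ} (i j : Fin N) : numTransmit (pairSt i j) = 1 := by
  unfold numTransmit
  have : (univ.filter fun k => pairSt i j k = NodeState.x) = {i} := by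
    ext k; simp [pairSt_eq_x_iff]
  rw [this, Finset.card_singleton]

lemma numListen_pair {N : ℕ} (i j : Fin N) (hji : j ≠ i) : numListen (pairSt i j) = 1 := by
  unfold numListen
  have : (univ.filter fun k => pairSt i j k = NodeState.l) = {j} := by
    ext k; simp [pairSt_eq_l_iff i j k hji]
  rw [this, Finset.card_singleton]

lemma pair_mem_CF {N : ℕ} (i j : Fin N) : pairSt i j ∈ CF N := by
  rw [mem_CF, numTransmit_pair]

lemma dirA {N : ℕ} (L X ρ : Fin N → ℝ) (hL : ∀ i, 0 < L i) (hX : ∀ i, 0 < X i)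
    (π : NetState N → ℝ) (hfeas : P1Feasible N L X ρ π) :
    ∃ α β : Fin N → ℝ, ∃ χ : Fin N → Fin N → ℝ, P3Feasible N L X ρ α β χ ∧
      ∑ w ∈ CF N, π w * (nu w * gam w) = ∑ i, β i := by
  obtain ⟨hπ0, hπCF, hπ1, hπρ⟩ := hfeas
  set χ : Fin N → Fin N → ℝ := fun i j =>
    ∑ w ∈ (CF N).filter (fun w => w i = NodeState.x ∧ w j = NodeState.l),
      π w / (numListen w : ℝ) with hχdef
  set β : Fin N → ℝ := fun i =>
    ∑ w ∈ (CF N).filter (fun w => w i = NodeState.x ∧ 0 < numListen w), π w with hβdef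
  set α : Fin N → ℝ := fun j => ∑ i ∈ univ.erase j, χ i j with hαdef
  have hχnn : ∀ i j, 0 ≤ χ i j := by
    intro i j
    apply Finset.sum_nonneg
    intro w _
    exact div_nonneg (hπ0 w) (Nat.cast_nonneg _)
  have hβnn : ∀ i, 0 ≤ β i := fun i => Finset.sum_nonneg fun w _ => hπ0 w
  have hαnn : ∀ j, 0 ≤ α j := fun j => Finset.sum_nonneg fun i _ => hχnn i j
  -- A1 : row sums of χ equal β
  have hA : ∀ i, ∑ j ∈ univ.erase i, χ i j = β i := by
    intro i
    have e1 : ∑ j ∈ univ.erase i, χ i j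
        = ∑ w ∈ CF N, ∑ j ∈ univ.erase i,
            (if w i = NodeState.x ∧ w j = NodeState.l then π w / (numListen w : ℝ) else 0) := by
      rw [Finset.sum_comm]
      exact Finset.sum_congr rfl fun j _ => Finset.sum_filter _ _
    rw [e1, hβdef]
    dsimp only
    rw [Finset.sum_filter]
    refine Finset.sum_congr rfl fun w _ => ?_
    by_cases hx : w i = NodeState.x
    · simp only [hx, true_and]
      rw [← Finset.sum_filter, Finset.sum_const]
      have hfil : (univ.erase i).filter (fun j => w j = NodeState.l)
          = univ.filter (fun j => w j = NodeState.l) := by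
        ext j
        simp only [Finset.mem_filter, Finset.mem_erase, Finset.mem_univ, true_and, and_true]
        constructor
        · exact fun h => h.2
        · intro h
          refine ⟨fun hji => ?_, h⟩
          rw [hji] at h; rw [h] at hx; exact absurd hx (by decide)
      rw [hfil]
      rw [show (univ.filter fun j => w j = NodeState.l).card = numListen w from rfl]
      by_cases h0 : numListen w = 0
      · simp [h0]
      · have hpos : 0 < numListen w := Nat.pos_of_ne_zero h0
        rw [if_pos hpos, nsmul_eq_mul, mul_comm,
          div_mul_cancel₀ _ (by exact_mod_cast h0 : (numListen w : ℝ) ≠ 0)]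
    · simp [hx]
  -- A2 : α is dominated by the listen mass
  have hαle : ∀ j0, α j0 ≤ ∑ w ∈ (CF N).filter (fun w => w j0 = NodeState.l), π w := by
    intro j0
    have e1 : α j0
        = ∑ w ∈ CF N, ∑ i ∈ univ.erase j0,
            (if w i = NodeState.x ∧ w j0 = NodeState.l then π w / (numListen w : ℝ) else 0) := by
      rw [hαdef]
      dsimp only
      rw [Finset.sum_comm]
      exact Finset.sum_congr rfl fun i _ => Finset.sum_filter _ _
    rw [e1, Finset.sum_filter]
    apply Finset.sum_le_sum
    intro w hw
    by_cases hl : w j0 = NodeState.l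
    · rw [if_pos hl]
      simp only [hl, and_true]
      rw [← Finset.sum_filter, Finset.sum_const]
      have hL1 : 1 ≤ numListen w := by
        apply Finset.card_pos.mpr
        exact ⟨j0, by simp [hl]⟩
      have hcnt : ((univ.erase j0).filter (fun i => w i = NodeState.x)).card ≤ 1 := by
        calc ((univ.erase j0).filter (fun i => w i = NodeState.x)).card
            ≤ (univ.filter (fun i => w i = NodeState.x)).card :=
              Finset.card_le_card (Finset.monotone_filter_left _ (Finset.erase_subset _ _))
          _ ≤ 1 := (mem_CF w).mp hw
      rw [nsmul_eq_mul]
      calc (((univ.erase j0).filter (fun i => w i = NodeState.x)).card : ℝ)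
            * (π w / (numListen w : ℝ))
          ≤ 1 * π w := by
            apply mul_le_mul
            · exact_mod_cast hcnt
            · exact div_le_self (hπ0 w) (by exact_mod_cast hL1)
            · exact div_nonneg (hπ0 w) (Nat.cast_nonneg _)
            · norm_num
        _ = π w := one_mul _
    · rw [if_neg hl]
      exact le_of_eq (Finset.sum_eq_zero fun i _ => if_neg (fun h => hl h.2))
  -- bound β by transmit mass
  have hβle : ∀ i, β i ≤ ∑ w ∈ (CF N).filter (fun w => w i = NodeState.x), π w := by
    intro i
    apply Finset.sum_le_sum_of_subset_of_nonneg
    · intro w hw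
      rw [Finset.mem_filter] at hw ⊢
      exact ⟨hw.1, hw.2.1⟩
    · intro w _ _; exact hπ0 w
  -- any sub-mass is at most 1
  have hone : ∀ p : NetState N → Prop, ∀ _ : DecidablePred p,
      ∑ w ∈ (CF N).filter p, π w ≤ 1 := by
    intro p _
    rw [← hπ1]
    exact Finset.sum_le_sum_of_subset_of_nonneg (Finset.filter_subset _ _) fun w _ _ => hπ0 w
  -- disjoint listen/transmit masses
  have hdisj : ∀ i, (∑ w ∈ (CF N).filter (fun w => w i = NodeState.l), π w)
      + (∑ w ∈ (CF N).filter (fun w => w i = NodeState.x), π w) ≤ 1 := by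
    intro i
    rw [← hπ1, Finset.sum_filter, Finset.sum_filter, ← Finset.sum_add_distrib]
    apply Finset.sum_le_sum
    intro w _
    by_cases h1 : w i = NodeState.l
    · have h2 : ¬(w i = NodeState.x) := by rw [h1]; decide
      rw [if_pos h1, if_neg h2, add_zero]
    · rw [if_neg h1, zero_add]
      split_ifs
      · exact le_refl _
      · exact hπ0 w
  -- A3 : value identity
  have hval : ∑ i, β i = ∑ w ∈ CF N, π w * (nu w * gam w) := by
    have e1 : ∑ i, β i = ∑ w ∈ CF N, ∑ i : Fin N,
        (if w i = NodeState.x ∧ 0 < numListen w then π w else 0) := by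
      rw [hβdef]
      dsimp only
      rw [Finset.sum_comm]
      exact Finset.sum_congr rfl fun i _ => Finset.sum_filter _ _
    rw [e1]
    refine Finset.sum_congr rfl fun w hw => ?_
    rw [mem_CF] at hw
    by_cases hg : 0 < numListen w
    · simp only [hg, and_true]
      rw [← Finset.sum_filter, Finset.sum_const]
      rw [show (univ.filter fun i => w i = NodeState.x).card = numTransmit w from rfl]
      unfold nu gam
      rw [if_pos hg, nsmul_eq_mul]
      rcases Nat.le_one_iff_eq_zero_or_eq_one.mp hw with h | h <;> simp [h]
    · simp only [hg, and_false, if_false, Finset.sum_const_zero]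
      unfold gam
      rw [if_neg hg]
      ring
  refine ⟨α, β, χ, ⟨?_, ?_, fun i j _ => hχnn i j, ?_, ?_, ?_, fun i => (hA i).ge, fun j => rfl⟩, hval.symm⟩
  · intro i
    exact ⟨hαnn i, le_trans (hαle i) (hone _ _)⟩
  · intro i
    exact ⟨hβnn i, le_trans (hβle i) (hone _ _)⟩
  · intro i
    calc α i * L i + β i * X i
        ≤ (∑ w ∈ (CF N).filter (fun w => w i = NodeState.l), π w) * L i
          + (∑ w ∈ (CF N).filter (fun w => w i = NodeState.x), π w) * X i :=
          add_le_add (mul_le_mul_of_nonneg_right (hαle i) (hL i).le)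
            (mul_le_mul_of_nonneg_right (hβle i) (hX i).le)
      _ ≤ ρ i := hπρ i
  · intro i
    exact le_trans (add_le_add (hαle i) (hβle i)) (hdisj i)
  · rw [hval]
    calc ∑ w ∈ CF N, π w * (nu w * gam w) ≤ ∑ w ∈ CF N, π w := by
          apply Finset.sum_le_sum
          intro w _
          unfold nu gam
          split_ifs <;> simp [hπ0 w]
      _ = 1 := hπ1

lemma dirB {N : ℕ} (L X ρ : Fin N → ℝ) (hL : ∀ i, 0 < L i) (hX : ∀ i, 0 < X i)
    (α β : Fin N → ℝ) (χ : Fin N → Fin N → ℝ) (hfeas : P3Feasible N L X ρ α β χ) :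
    ∃ π : NetState N → ℝ, P1Feasible N L X ρ π ∧
      ∑ w ∈ CF N, π w * (nu w * gam w) = ∑ i, β i := by
  obtain ⟨hα, hβ, hχ, hρ3, hαβ, hSb, hβχ, hαχ⟩ := hfeas
  set S : Fin N → ℝ := fun i => ∑ k ∈ univ.erase i, χ i k with hSdef
  set a : Fin N → Fin N → ℝ :=
    fun i j => if S i = 0 then 0 else χ i j * (β i / S i) with hadef
  have hSnn : ∀ i, 0 ≤ S i :=
    fun i => Finset.sum_nonneg fun k hk => hχ i k (Finset.ne_of_mem_erase hk).symm
  have hann : ∀ i, ∀ j ∈ univ.erase i, 0 ≤ a i j := by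
    intro i j hj
    rw [hadef]
    dsimp only
    split_ifs with h
    · exact le_refl _
    · exact mul_nonneg (hχ i j (Finset.ne_of_mem_erase hj).symm)
        (div_nonneg (hβ i).1 (hSnn i))
  have hasum : ∀ i, ∑ j ∈ univ.erase i, a i j = β i := by
    intro i
    by_cases h : S i = 0
    · have hb : β i = 0 := le_antisymm (h ▸ hβχ i) (hβ i).1
      rw [hadef]
      simp [h, hb]
    · rw [hadef]
      dsimp only
      rw [Finset.sum_congr rfl fun j _ => if_neg h, ← Finset.sum_mul,
        show (∑ j ∈ univ.erase i, χ i j) = S i from rfl, mul_comm,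
        div_mul_cancel₀ _ h]
  have hale : ∀ i, ∀ j ∈ univ.erase i, a i j ≤ χ i j := by
    intro i j hj
    rw [hadef]
    dsimp only
    split_ifs with h
    · exact hχ i j (Finset.ne_of_mem_erase hj).symm
    · have hS : 0 < S i := lt_of_le_of_ne (hSnn i) (Ne.symm h)
      exact mul_le_of_le_one_right (hχ i j (Finset.ne_of_mem_erase hj).symm)
        ((div_le_one hS).mpr (hβχ i))
  set π : NetState N → ℝ := fun w =>
    (if w = sleepSt N then 1 - ∑ i, β i else 0)
    + ∑ i : Fin N, ∑ j ∈ univ.erase i, (if w = pairSt i j then a i j else 0) with hπdef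
  have genSum : ∀ (T : Finset (NetState N)) (g : NetState N → ℝ),
      ∑ w ∈ T, π w * g w
        = (if sleepSt N ∈ T then (1 - ∑ i, β i) * g (sleepSt N) else 0)
          + ∑ i : Fin N, ∑ j ∈ univ.erase i,
              (if pairSt i j ∈ T then a i j * g (pairSt i j) else 0) := by
    intro T g
    have hpt : ∀ w, π w * g w
        = (if w = sleepSt N then (1 - ∑ i, β i) * g (sleepSt N) else 0)
          + ∑ i : Fin N, ∑ j ∈ univ.erase i,
              (if w = pairSt i j then a i j * g (pairSt i j) else 0) := by
      intro w
      rw [hπdef]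
      dsimp only
      rw [add_mul, Finset.sum_mul]
      congr 1
      · split_ifs with h
        · rw [h]
        · rw [zero_mul]
      · refine Finset.sum_congr rfl fun i _ => ?_
        rw [Finset.sum_mul]
        refine Finset.sum_congr rfl fun j _ => ?_
        split_ifs with h
        · rw [h]
        · rw [zero_mul]
    rw [Finset.sum_congr rfl fun w _ => hpt w, Finset.sum_add_distrib]
    congr 1
    · exact Finset.sum_ite_eq' T (sleepSt N) (fun _ => (1 - ∑ i, β i) * g (sleepSt N))
    · rw [Finset.sum_comm]
      refine Finset.sum_congr rfl fun i _ => ?_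
      rw [Finset.sum_comm]
      refine Finset.sum_congr rfl fun j _ => ?_
      exact Finset.sum_ite_eq' T (pairSt i j) (fun _ => a i j * g (pairSt i j))
  have hπnn : ∀ w, 0 ≤ π w := by
    intro w
    rw [hπdef]
    dsimp only
    apply add_nonneg
    · split_ifs with h
      · linarith
      · exact le_refl _
    · apply Finset.sum_nonneg
      intro i _
      apply Finset.sum_nonneg
      intro j hj
      split_ifs with h
      · exact hann i j hj
      · exact le_refl _
  have hπz : ∀ w ∉ CF N, π w = 0 := by
    intro w hw
    rw [hπdef]
    dsimp only
    have hws : w ≠ sleepSt N := by rintro rfl; exact hw (sleep_mem_CF N)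
    rw [if_neg hws, zero_add]
    apply Finset.sum_eq_zero
    intro i _
    apply Finset.sum_eq_zero
    intro j _
    have hwp : w ≠ pairSt i j := by rintro rfl; exact hw (pair_mem_CF i j)
    exact if_neg hwp
  have htot : ∑ w ∈ CF N, π w = 1 := by
    have h := genSum (CF N) (fun _ => 1)
    simp only [mul_one] at h
    rw [h, if_pos (sleep_mem_CF N)]
    have h2 : ∀ i : Fin N, ∑ j ∈ univ.erase i,
        (if pairSt i j ∈ CF N then a i j else 0) = β i := by
      intro i
      rw [Finset.sum_congr rfl fun j _ => if_pos (pair_mem_CF i j)]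
      exact hasum i
    rw [Finset.sum_congr rfl fun i _ => h2 i]
    ring
  have htr : ∀ i0, ∑ w ∈ (CF N).filter (fun w => w i0 = NodeState.x), π w = β i0 := by
    intro i0
    have h := genSum ((CF N).filter (fun w => w i0 = NodeState.x)) (fun _ => 1)
    simp only [mul_one] at h
    rw [h]
    have hs : sleepSt N ∉ (CF N).filter (fun w => w i0 = NodeState.x) := by
      rw [Finset.mem_filter]
      rintro ⟨-, hc⟩
      exact absurd hc (by simp [sleepSt])
    rw [if_neg hs, zero_add]
    have hmem : ∀ i j : Fin N,
        (pairSt i j ∈ (CF N).filter (fun w => w i0 = NodeState.x)) ↔ i0 = i := by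
      intro i j
      rw [Finset.mem_filter, pairSt_eq_x_iff]
      simp [pair_mem_CF]
    calc ∑ i : Fin N, ∑ j ∈ univ.erase i,
          (if pairSt i j ∈ (CF N).filter (fun w => w i0 = NodeState.x) then a i j else 0)
        = ∑ i : Fin N, ∑ j ∈ univ.erase i, (if i0 = i then a i j else 0) := by
          exact Finset.sum_congr rfl fun i _ => Finset.sum_congr rfl fun j _ =>
            if_congr (hmem i j) rfl rfl
      _ = ∑ i : Fin N, (if i0 = i then ∑ j ∈ univ.erase i, a i j else 0) := by
          refine Finset.sum_congr rfl fun i _ => ?_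
          split_ifs with hcase <;> simp
      _ = ∑ j ∈ univ.erase i0, a i0 j := by
          rw [Finset.sum_ite_eq univ i0 (fun i => ∑ j ∈ univ.erase i, a i j),
            if_pos (Finset.mem_univ i0)]
      _ = β i0 := hasum i0
  have hli : ∀ i0, ∑ w ∈ (CF N).filter (fun w => w i0 = NodeState.l), π w ≤ α i0 := by
    intro i0
    have h := genSum ((CF N).filter (fun w => w i0 = NodeState.l)) (fun _ => 1)
    simp only [mul_one] at h
    rw [h]
    have hs : sleepSt N ∉ (CF N).filter (fun w => w i0 = NodeState.l) := by
      rw [Finset.mem_filter]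
      rintro ⟨-, hc⟩
      exact absurd hc (by simp [sleepSt])
    rw [if_neg hs, zero_add]
    have key : ∀ i : Fin N, (∑ j ∈ univ.erase i,
        if pairSt i j ∈ (CF N).filter (fun w => w i0 = NodeState.l) then a i j else 0)
        ≤ (if i = i0 then 0 else χ i i0) := by
      intro i
      by_cases hi : i = i0
      · rw [if_pos hi]
        apply le_of_eq
        apply Finset.sum_eq_zero
        intro j hj
        apply if_neg
        rw [Finset.mem_filter]
        rintro ⟨-, hc⟩
        rw [← hi] at hc
        have hx : pairSt i j i = NodeState.x := (pairSt_eq_x_iff i j i).mpr rfl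
        rw [hx] at hc
        exact absurd hc (by decide)
      · rw [if_neg hi]
        have hcond : ∀ j ∈ univ.erase i,
            ((pairSt i j ∈ (CF N).filter (fun w => w i0 = NodeState.l)) ↔ i0 = j) := by
          intro j hj
          rw [Finset.mem_filter, pairSt_eq_l_iff i j i0 (Finset.ne_of_mem_erase hj)]
          simp [pair_mem_CF]
        rw [Finset.sum_congr rfl fun j hj => if_congr (hcond j hj) rfl rfl,
          Finset.sum_ite_eq (univ.erase i) i0 (fun j => a i j),
          if_pos (Finset.mem_erase.mpr ⟨fun hc => hi hc.symm, Finset.mem_univ i0⟩)]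
        exact hale i i0 (Finset.mem_erase.mpr ⟨fun hc => hi hc.symm, Finset.mem_univ i0⟩)
    calc ∑ i : Fin N, ∑ j ∈ univ.erase i,
          (if pairSt i j ∈ (CF N).filter (fun w => w i0 = NodeState.l) then a i j else 0)
        ≤ ∑ i : Fin N, (if i = i0 then 0 else χ i i0) :=
          Finset.sum_le_sum fun i _ => key i
      _ = ∑ i ∈ univ.erase i0, χ i i0 := by
          rw [← Finset.add_sum_erase univ _ (Finset.mem_univ i0), if_pos rfl, zero_add]
          exact Finset.sum_congr rfl fun i hi => if_neg (Finset.ne_of_mem_erase hi)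
      _ = α i0 := (hαχ i0).symm
  have hvalB : ∑ w ∈ CF N, π w * (nu w * gam w) = ∑ i, β i := by
    rw [genSum (CF N) (fun w => nu w * gam w), if_pos (sleep_mem_CF N)]
    have h0 : nu (sleepSt N) * gam (sleepSt N) = 0 := by
      unfold nu
      rw [numTransmit_sleep]
      norm_num
    rw [h0, mul_zero, zero_add]
    have h2 : ∀ i : Fin N, ∑ j ∈ univ.erase i,
        (if pairSt i j ∈ CF N then a i j * (nu (pairSt i j) * gam (pairSt i j)) else 0)
        = β i := by
      intro i
      rw [← hasum i]
      refine Finset.sum_congr rfl fun j hj => ?_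
      rw [if_pos (pair_mem_CF i j)]
      have h1 : nu (pairSt i j) = 1 := by
        unfold nu; rw [numTransmit_pair]; norm_num
      have h2 : gam (pairSt i j) = 1 := by
        unfold gam; rw [numListen_pair i j (Finset.ne_of_mem_erase hj)]; norm_num
      rw [h1, h2]
      ring
    exact Finset.sum_congr rfl fun i _ => h2 i
  refine ⟨π, ⟨hπnn, hπz, htot, ?_⟩, hvalB⟩
  intro i
  rw [htr i]
  have h1 : (∑ w ∈ (CF N).filter (fun w => w i = NodeState.l), π w) * L i ≤ α i * L i :=
    mul_le_mul_of_nonneg_right (hli i) (hL i).le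
  linarith [hρ3 i]

/-- The optimal value of (P1) with the anyput state throughput
`T_w = ν_w · γ_w` equals the optimal value of (P3). -/
theorem oracle_anyput_eq_P3 (N : ℕ) (hN : 2 ≤ N) (L X ρ : Fin N → ℝ)
    (hL : ∀ i, 0 < L i) (hX : ∀ i, 0 < X i) (hρ : ∀ i, 0 < ρ i) :
    sSup {v : ℝ | ∃ π : NetState N → ℝ, P1Feasible N L X ρ π ∧
        v = ∑ w ∈ CF N, π w * (nu w * gam w)}
      = sSup {v : ℝ | ∃ α β : Fin N → ℝ, ∃ χ : Fin N → Fin N → ℝ,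
          P3Feasible N L X ρ α β χ ∧ v = ∑ i, β i} := by
  congr 1
  ext v
  simp only [Set.mem_setOf_eq]
  constructor
  · rintro ⟨π, hf, rfl⟩
    obtain ⟨α, β, χ, h3, hv⟩ := dirA L X ρ hL hX π hf
    exact ⟨α, β, χ, h3, hv⟩
  · rintro ⟨α, β, χ, h3, rfl⟩
    obtain ⟨π, hf, hv⟩ := dirB L X ρ hL hX α β χ h3
    exact ⟨π, hf, hv.symm⟩
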